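/- Let r ≥ 2, let M be a simple binary matroid of rank r, and let e be a loose element of M. Suppose there is a basis B of M such that B ∪ {e} is a circuit of M. Then either M is isomorphic to L_r with e corresponding to the element labeled by the all-ones column, or there is a restriction N of M_r whose ground set contains the distinguished element z and an isomorphism from M to N mapping e to z. -/

import Mathlib

namespace LoosePaper

open Set
open scoped Matroid

variable {α β : Type*}

/-- A circuit of a matroid: a minimal dependent set. -/
def Circuit (M : Matroid α) (C : Set α) : Prop :=
  M.Dep C ∧ ∀ D, M.Dep D → D ⊆ C → D = C

/-- The rank of a matroid: the (common) cardinality of its bases. -/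
noncomputable def rank (M : Matroid α) : ℕ :=
  sInf {n | ∃ B, M.IsBase B ∧ B.ncard = n}

/-- An element is loose if every circuit containing it has size at least the rank. -/
def Loose (M : Matroid α) (e : α) : Prop :=
  e ∈ M.E ∧ ∀ C, Circuit M C → e ∈ C → rank M ≤ C.ncard

/-- An element is free if every circuit containing it is spanning. -/
def FreeElt (M : Matroid α) (e : α) : Prop :=
  e ∈ M.E ∧ ∀ C, Circuit M C → e ∈ C → M.closure C = M.E

/-- A coloop: an element contained in every base. -/
def Coloop (M : Matroid α) (e : α) : Prop :=
  e ∈ M.E ∧ ∀ B, M.IsBase B → e ∈ B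

def NoColoops (M : Matroid α) : Prop := ∀ e, ¬ Coloop M e

/-- A matroid is simple if every pair of its elements is independent. -/
def Simple (M : Matroid α) : Prop :=
  ∀ e ∈ M.E, ∀ f ∈ M.E, M.Indep {e, f}

/-- A matroid is paving if every circuit has size at least the rank. -/
def Paving (M : Matroid α) : Prop :=
  ∀ C, Circuit M C → rank M ≤ C.ncard

/-- `M` is representable over the field `F`. -/
def Representable (M : Matroid α) (F : Type*) [Field F] : Prop :=
  ∃ (ι : Type) (v : α → ι → F),
    ∀ I, I ⊆ M.E → (M.Indep I ↔ LinearIndependent F (fun x : I => v x.1))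

/-- `N` is the vector matroid, on ground set all of `η`, of the matrix whose
column labelled by `c : η` is `A c`. -/
def IsVectorMatroidOn (F : Type*) [Field F] {η ι : Type*} (A : η → ι → F)
    (N : Matroid η) : Prop :=
  N.E = Set.univ ∧ ∀ I : Set η, (N.Indep I ↔ LinearIndependent F (fun x : I => A x.1))

/-- `φ` is an isomorphism from `M` to `N`. -/
def IsIsoTo (M : Matroid α) (N : Matroid β) (φ : α → β) : Prop :=
  Set.BijOn φ M.E N.E ∧ ∀ I, I ⊆ M.E → (M.Indep I ↔ N.Indep (φ '' I))

/-- The matrix `[I_r | D]` of the matroid `M_r`; the column `Sum.inl i` is the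
`i`-th standard basis vector, the column `Sum.inr 0` (the distinguished element `z`)
is the all-ones vector, and for `1 ≤ j ≤ r-1` the column `Sum.inr j` has ones
exactly in rows `0` and `j` (`0`-indexed). -/
def MrMatrix (r : ℕ) : (Fin r ⊕ Fin r) → Fin r → ZMod 2
  | Sum.inl i => fun k => if k = i then 1 else 0
  | Sum.inr j => fun k =>
      if j.val = 0 then 1 else if k.val = 0 ∨ k = j then 1 else 0

/-- The matrix `[I_r | D]` of the matroid `N_r`; the column `Sum.inr 0`
(the distinguished element `z`) is `(0,1,…,1)ᵀ`, and for `1 ≤ j ≤ r-2` the column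
`Sum.inr j` has ones exactly in rows `0`, `1` and `j+1` (`0`-indexed). -/
def NrMatrix (r : ℕ) : (Fin r ⊕ Fin (r - 1)) → Fin r → ZMod 2
  | Sum.inl i => fun k => if k = i then 1 else 0
  | Sum.inr j => fun k =>
      if j.val = 0 then (if k.val = 0 then 0 else 1)
      else if k.val = 0 ∨ k.val = 1 ∨ k.val = j.val + 1 then 1 else 0

/-- The matrix `[I_r | D]` of the matroid `L_r`; the columns of `D` are the all-ones
vector, `(1,1,0,…,0)ᵀ`, `(1,0,1,0,…,0)ᵀ` and `(0,1,1,0,…,0)ᵀ`. -/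
def LrMatrix (r : ℕ) : (Fin r ⊕ Fin 4) → Fin r → ZMod 2
  | Sum.inl i => fun k => if k = i then 1 else 0
  | Sum.inr j => fun k =>
      if j = 0 then 1
      else if j = 1 then (if k.val = 0 ∨ k.val = 1 then 1 else 0)
      else if j = 2 then (if k.val = 0 ∨ k.val = 2 then 1 else 0)
      else if k.val = 1 ∨ k.val = 2 then 1 else 0

/-- The matrix `[I_r | D]` of the matroid `J_r`; the columns of `D` are
`(0,1,1,…,1)ᵀ`, `(1,1,1,0,…,0)ᵀ`, `(1,1,0,1,0,…,0)ᵀ` and `(1,0,1,1,0,…,0)ᵀ`. -/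
def JrMatrix (r : ℕ) : (Fin r ⊕ Fin 4) → Fin r → ZMod 2
  | Sum.inl i => fun k => if k = i then 1 else 0
  | Sum.inr j => fun k =>
      if j = 0 then (if k.val = 0 then 0 else 1)
      else if j = 1 then (if k.val = 0 ∨ k.val = 1 ∨ k.val = 2 then 1 else 0)
      else if j = 2 then (if k.val = 0 ∨ k.val = 1 ∨ k.val = 3 then 1 else 0)
      else if k.val = 0 ∨ k.val = 2 ∨ k.val = 3 then 1 else 0

/-- A matrix over `GF(3)` whose vector matroid is `U_{2,4}`. -/
def U24Matrix : Fin 4 → Fin 2 → ZMod 3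
  | 0 => fun k => if k = 0 then 1 else 0
  | 1 => fun k => if k = 1 then 1 else 0
  | 2 => fun _ => 1
  | 3 => fun k => if k = 0 then 1 else 2

/-- A `GF(3)`-matrix representing the matroid obtained from a circuit
`{e, c_0, …, c_{n-1}}` (where `e` is the element `Sum.inl ()`) by 2-summing a copy
of `U_{2,4}` across each element `c_d` with `d ∈ D`.  For `d ∉ D` the element
`Sum.inr (d, 0)` is `c_d`, and for `d ∈ D` the elements `Sum.inr (d, j)`,
`j = 0, 1, 2`, are the three elements of the copy of `U_{2,4}` other than its
basepoint. -/
def thetaMatrix (n : ℕ) (D : Finset (Fin n)) :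
    (Unit ⊕ Fin n × Fin 3) → (Fin n ⊕ Fin n) → ZMod 3
  | Sum.inl _ => fun row => Sum.elim (fun _ => 1) (fun _ => 0) row
  | Sum.inr (d, j) => fun row =>
      let ed : (Fin n ⊕ Fin n) → ZMod 3 :=
        Sum.elim (fun i => if i = d then 1 else 0) (fun _ => 0)
      let wd : (Fin n ⊕ Fin n) → ZMod 3 :=
        Sum.elim (fun _ => 0) (fun i => if i = d then 1 else 0)
      if d ∈ D then
        (if j = 0 then wd row else if j = 1 then ed row + wd row else ed row - wd row)
      else ed row

/-- The ground set of the 2-sum construction: the circuit element `e`, the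
untouched circuit elements `c_d` for `d ∉ D`, and three `U_{2,4}`-elements for
each `d ∈ D`. -/
def thetaGround (n : ℕ) (D : Finset (Fin n)) : Set (Unit ⊕ Fin n × Fin 3) :=
  {x | ∀ d : Fin n, ∀ j : Fin 3, x = Sum.inr (d, j) → (j = 0 ∨ d ∈ D)}


section AuxVM
variable {F : Type*} [Field F]

lemma vm_aug {η ι : Type*} [Fintype η] (A : η → ι → F) {I J : Set η}
    (hI : LinearIndependent F fun x : I => A x.1) (hJ : LinearIndependent F fun x : J => A x.1)
    (hlt : I.ncard < J.ncard) :
    ∃ e ∈ J, e ∉ I ∧ LinearIndependent F fun x : (insert e I : Set η) => A x.1 := by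
  classical
  by_contra hcon
  push_neg at hcon
  have hspan : ∀ e ∈ J, A e ∈ Submodule.span F (A '' I) := by
    intro e he
    by_cases heI : e ∈ I
    · exact Submodule.subset_span ⟨e, heI, rfl⟩
    · have h2 : ¬ LinearIndepOn F A (insert e I) := hcon e he heI
      rw [linearIndepOn_insert heI] at h2
      tauto
  have hIinj : Set.InjOn A I := by
    intro x hx y hy hxy
    have := hI.injective (a₁ := ⟨x, hx⟩) (a₂ := ⟨y, hy⟩) hxy
    exact congrArg Subtype.val this
  have hJinj : Set.InjOn A J := by
    intro x hx y hy hxy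
    have := hJ.injective (a₁ := ⟨x, hx⟩) (a₂ := ⟨y, hy⟩) hxy
    exact congrArg Subtype.val this
  haveI : Fintype I := (Set.toFinite I).fintype
  haveI : Fintype J := (Set.toFinite J).fintype
  haveI : Fintype (A '' I) := (Set.toFinite _).fintype
  haveI : Fintype (A '' J) := (Set.toFinite _).fintype
  have hIli : LinearIndependent F ((↑) : (A '' I) → (ι → F)) :=
    (linearIndepOn_iff_image hIinj).mp hI
  have hJli : LinearIndependent F ((↑) : (A '' J) → (ι → F)) :=
    (linearIndepOn_iff_image hJinj).mp hJ
  have hIc : Module.finrank F (Submodule.span F (A '' I)) = I.ncard := by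
    rw [finrank_span_set_eq_card hIli, ← Set.ncard_eq_toFinset_card', Set.ncard_image_of_injOn hIinj]
  have hJc : Module.finrank F (Submodule.span F (A '' J)) = J.ncard := by
    rw [finrank_span_set_eq_card hJli, ← Set.ncard_eq_toFinset_card', Set.ncard_image_of_injOn hJinj]
  have hle : Submodule.span F (A '' J) ≤ Submodule.span F (A '' I) := by
    rw [Submodule.span_le]
    rintro y ⟨x, hx, rfl⟩
    exact hspan x hx
  haveI : FiniteDimensional F (Submodule.span F (A '' I)) :=
    FiniteDimensional.span_of_finite F (Set.toFinite _)
  have := Submodule.finrank_mono hle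
  omega

noncomputable def vmatroid {η ι : Type*} [Fintype η] (A : η → ι → F) : Matroid η :=
  (IndepMatroid.ofFinite (Set.finite_univ)
    (fun I => LinearIndependent F fun x : I => A x.1)
    (linearIndependent_empty_type)
    (fun I J hJ hIJ => hJ.comp (Set.inclusion hIJ) (Set.inclusion_injective hIJ))
    (fun I J hI hJ hlt => vm_aug A hI hJ hlt)
    (fun I _ => Set.subset_univ I)).matroid

lemma vmatroid_E {η ι : Type*} [Fintype η] (A : η → ι → F) : (vmatroid A).E = Set.univ := rfl

lemma vmatroid_indep {η ι : Type*} [Fintype η] (A : η → ι → F) (I : Set η) :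
    (vmatroid A).Indep I ↔ LinearIndependent F fun x : I => A x.1 := by
  simp [vmatroid]

end AuxVM
section AuxZ2


variable {V : Type*} [AddCommGroup V] [Module (ZMod 2) V]

lemma zmod2_cases (a : ZMod 2) : a = 0 ∨ a = 1 := by revert a; decide

lemma z2_add_self (x : V) : x + x = 0 := by
  have h2 : (2 : ZMod 2) = 0 := by decide
  have : (2 : ZMod 2) • x = 0 := by rw [h2, zero_smul]
  rw [two_smul] at this; exact this

lemma z2_li_iff {κ : Type*} [Fintype κ] (f : κ → V) :
    LinearIndependent (ZMod 2) f ↔ ∀ s : Finset κ, s.Nonempty → ∑ i ∈ s, f i ≠ 0 := by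
  classical
  rw [Fintype.linearIndependent_iff]
  constructor
  · intro h s hs hsum
    obtain ⟨i, hi⟩ := hs
    have h2 := h (fun j => if j ∈ s then 1 else 0) ?_ i
    · simp [hi] at h2
    · rw [← hsum]
      simp only [ite_smul, one_smul, zero_smul]
      rw [Finset.sum_ite_mem, Finset.univ_inter]
  · intro h c hc i
    by_contra hci
    set s := Finset.univ.filter (fun j => c j ≠ 0) with hs_def
    have hs : s.Nonempty := ⟨i, by simp [hs_def, hci]⟩
    apply h s hs
    rw [← hc]
    rw [Finset.sum_filter]
    refine Finset.sum_congr rfl (fun j _ => ?_)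
    rcases zmod2_cases (c j) with h0 | h1
    · simp [h0]
    · simp [h1]

lemma z2_li_set_iff {α : Type*} (f : α → V) {I : Set α} (hI : I.Finite) :
    (LinearIndependent (ZMod 2) fun x : I => f x.1) ↔
      ∀ s : Finset α, ↑s ⊆ I → s.Nonempty → ∑ i ∈ s, f i ≠ 0 := by
  classical
  haveI := hI.fintype
  rw [z2_li_iff]
  constructor
  · intro h s hsI hne hsum
    have hinj : Set.InjOn (Subtype.val : I → α) (Subtype.val ⁻¹' ↑s) :=
      Subtype.val_injective.injOn
    refine h (s.preimage Subtype.val hinj) ?_ ?_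
    · obtain ⟨x, hx⟩ := hne
      exact ⟨⟨x, hsI hx⟩, by simp [hx]⟩
    · rw [Finset.sum_preimage Subtype.val s hinj f]
      · exact hsum
      · intro x hx hxr
        exact absurd (by simpa using hsI hx : x ∈ I) (by simpa [Subtype.range_val] using hxr)
  · intro h t ht
    have : ∑ x ∈ t.map (Function.Embedding.subtype _), f x = ∑ x ∈ t, f x.1 := by
      rw [Finset.sum_map]; rfl
    refine fun hsum => h (t.map (Function.Embedding.subtype _)) ?_ (by obtain ⟨x, hx⟩ := ht; exact ⟨_, Finset.mem_map_of_mem _ hx⟩) (by rw [this]; exact hsum)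
    intro x hx
    obtain ⟨⟨y, hy⟩, _, rfl⟩ := Finset.mem_map.1 (Finset.mem_coe.1 hx)
    exact hy
end AuxZ2
section AuxCoord


variable {F : Type*} [Field F] {V : Type*} [AddCommGroup V] [Module F V]
variable {r : ℕ} {w : Fin r → V}

noncomputable def coordL (hw : LinearIndependent F w) :
    Submodule.span F (Set.range w) →ₗ[F] (Fin r → F) where
  toFun p i := (Module.Basis.span hw).repr p i
  map_add' p q := by funext i; simp
  map_smul' c p := by funext i; simp

lemma coordL_inj (hw : LinearIndependent F w) {p : Submodule.span F (Set.range w)}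
    (h : coordL hw p = 0) : p = 0 := by
  have h2 : (Module.Basis.span hw).repr p = 0 := by
    ext i; exact congrFun h i
  simpa using (Module.Basis.span hw).repr.injective (by simpa using h2)

open Classical in
noncomputable def coordFun (hw : LinearIndependent F w) (x : V) : Fin r → F :=
  if hx : x ∈ Submodule.span F (Set.range w) then coordL hw ⟨x, hx⟩ else 0

lemma coordFun_w (hw : LinearIndependent F w) (i : Fin r) :
    coordFun hw (w i) = Pi.single i 1 := by
  have hmem : w i ∈ Submodule.span F (Set.range w) :=
    Submodule.subset_span (Set.mem_range_self i)
  rw [coordFun, dif_pos hmem]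
  have he : (⟨w i, hmem⟩ : Submodule.span F (Set.range w)) = Module.Basis.span hw i :=
    (Module.Basis.span_apply hw i).symm
  funext j
  show (Module.Basis.span hw).repr _ j = _
  rw [he, Module.Basis.repr_self]
  rw [Finsupp.single_apply, Pi.single_apply]
  simp [eq_comm]

lemma coordFun_sum (hw : LinearIndependent F w) {α : Type*} (v : α → V) (s : Finset α)
    (hs : ∀ x ∈ s, v x ∈ Submodule.span F (Set.range w)) :
    ∑ x ∈ s, coordFun hw (v x) = coordFun hw (∑ x ∈ s, v x) := by
  classical
  induction s using Finset.induction_on with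
  | empty =>
    simp only [Finset.sum_empty]
    rw [coordFun, dif_pos (Submodule.zero_mem _)]
    have : (⟨(0 : V), Submodule.zero_mem _⟩ : Submodule.span F (Set.range w)) = 0 := rfl
    rw [this, map_zero]
  | insert a t hx ih =>
    have ha := hs a (Finset.mem_insert_self a t)
    have ht : ∀ x ∈ t, v x ∈ Submodule.span F (Set.range w) :=
      fun x hxt => hs x (Finset.mem_insert_of_mem hxt)
    have htt : (∑ x ∈ t, v x) ∈ Submodule.span F (Set.range w) :=
      Submodule.sum_mem _ ht
    rw [Finset.sum_insert hx, Finset.sum_insert hx, ih ht]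
    rw [coordFun, coordFun, coordFun, dif_pos ha, dif_pos htt,
      dif_pos (Submodule.add_mem _ ha htt)]
    rw [← map_add]
    rfl

lemma coordFun_eq_zero_iff (hw : LinearIndependent F w) {x : V}
    (hx : x ∈ Submodule.span F (Set.range w)) : coordFun hw x = 0 ↔ x = 0 := by
  rw [coordFun, dif_pos hx]
  constructor
  · intro h
    have := coordL_inj hw h
    simpa using congrArg Subtype.val this
  · rintro rfl
    have : (⟨(0 : V), hx⟩ : Submodule.span F (Set.range w)) = 0 := rfl
    rw [this, map_zero]

lemma coordFun_injOn (hw : LinearIndependent F w) {x y : V}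
    (hx : x ∈ Submodule.span F (Set.range w)) (hy : y ∈ Submodule.span F (Set.range w))
    (h : coordFun hw x = coordFun hw y) : x = y := by
  rw [coordFun, dif_pos hx] at h
  rw [coordFun, dif_pos hy] at h
  have : (⟨x, hx⟩ : Submodule.span F (Set.range w)) = ⟨y, hy⟩ := by
    by_contra hne
    have := sub_ne_zero.2 hne
    have h0 : coordL hw (⟨x, hx⟩ - ⟨y, hy⟩) = 0 := by rw [map_sub, h, sub_self]
    exact this (coordL_inj hw h0)
  exact congrArg Subtype.val this
end AuxCoord

section Extra

lemma single_sum_apply {r : ℕ} (S : Finset (Fin r)) (j : Fin r) :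
    (∑ i ∈ S, Pi.single i (1 : ZMod 2)) j = if j ∈ S then 1 else 0 := by
  classical
  rw [Finset.sum_apply]
  by_cases hj : j ∈ S
  · rw [if_pos hj, Finset.sum_eq_single_of_mem j hj
      (fun b _ hb => by rw [Pi.single_apply, if_neg (fun h => hb h.symm)]),
      Pi.single_apply, if_pos rfl]
  · rw [if_neg hj, Finset.sum_eq_zero]
    intro b hb
    rw [Pi.single_apply]
    exact if_neg (fun h : j = b => hj (h ▸ hb))

lemma vec_eq_sum_supp {r : ℕ} (y : Fin r → ZMod 2) :
    y = ∑ i ∈ Finset.univ.filter (fun i => y i ≠ 0), Pi.single i (1 : ZMod 2) := by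
  classical
  funext j
  rw [single_sum_apply]
  simp only [Finset.mem_filter, Finset.mem_univ, true_and]
  rcases zmod2_cases (y j) with h | h <;> simp [h]

lemma iso_of_crit {α η : Type*} {M : Matroid α} {N : Matroid η}
    {V W : Type*} [AddCommGroup V] [AddCommGroup W]
    (u : α → V) (A : η → W)
    (hEfin : M.E.Finite)
    (hcritM : ∀ I, I ⊆ M.E → (M.Indep I ↔ ∀ s : Finset α, ↑s ⊆ I → s.Nonempty → ∑ i ∈ s, u i ≠ 0))
    (hcritN : ∀ J : Set η, (N.Indep J ↔ ∀ t : Finset η, ↑t ⊆ J → t.Nonempty → ∑ i ∈ t, A i ≠ 0))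
    (φ : α → η) (hinj : Set.InjOn φ M.E)
    (hcomm : ∀ s : Finset α, ↑s ⊆ M.E → ((∑ i ∈ s, u i = 0) ↔ (∑ i ∈ s, A (φ i) = 0))) :
    IsIsoTo M (N ↾ (φ '' M.E)) φ := by
  classical
  constructor
  · exact ⟨fun x hx => Set.mem_image_of_mem _ hx, hinj, Set.surjOn_image _ _⟩
  intro I hI
  rw [Matroid.restrict_indep_iff, hcritN, hcritM I hI]
  have hsum_img : ∀ s : Finset α, ↑s ⊆ M.E → ∑ y ∈ s.image φ, A y = ∑ i ∈ s, A (φ i) :=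
    fun s hs => Finset.sum_image (fun x hx y hy hxy => hinj (hs hx) (hs hy) hxy)
  constructor
  · intro h
    refine ⟨?_, Set.image_mono hI⟩
    intro t htsub htne htsum
    set s : Finset α := (hEfin.subset hI).toFinset.filter (fun x => φ x ∈ t) with hs_def
    have hsI : ↑s ⊆ I := by
      intro x hx
      have := Finset.mem_filter.1 (Finset.mem_coe.1 hx)
      exact (Set.Finite.mem_toFinset _).1 this.1
    have hsE : ↑s ⊆ M.E := hsI.trans hI
    have key : t = s.image φ := by
      ext y
      constructor
      · intro hy
        obtain ⟨x, hxI, rfl⟩ := htsub hy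
        exact Finset.mem_image.2 ⟨x, Finset.mem_filter.2 ⟨(Set.Finite.mem_toFinset _).2 hxI, hy⟩, rfl⟩
      · intro hy
        obtain ⟨x, hx, rfl⟩ := Finset.mem_image.1 hy
        exact (Finset.mem_filter.1 hx).2
    have hsne : s.Nonempty := by
      obtain ⟨y, hy⟩ := htne
      rw [key] at hy
      obtain ⟨x, hx, _⟩ := Finset.mem_image.1 hy
      exact ⟨x, hx⟩
    refine h s hsI hsne ?_
    rw [hcomm s hsE]
    rw [key, hsum_img s hsE] at htsum
    exact htsum
  · rintro ⟨h, _⟩ s hsub hne hsum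
    have hsE : ↑s ⊆ M.E := hsub.trans hI
    have htsub : ↑(s.image φ) ⊆ φ '' I := by
      intro y hy
      obtain ⟨x, hx, rfl⟩ := Finset.mem_image.1 (Finset.mem_coe.1 hy)
      exact Set.mem_image_of_mem _ (hsub hx)
    have htne : (s.image φ).Nonempty := by
      obtain ⟨x, hx⟩ := hne; exact ⟨φ x, Finset.mem_image_of_mem _ hx⟩
    refine h (s.image φ) htsub htne ?_
    rw [hsum_img s hsE, ← hcomm s hsE]
    exact hsum

lemma iso_of_crit_full {α η : Type*} {M : Matroid α} {N : Matroid η}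
    (hNE : N.E = Set.univ)
    {V W : Type*} [AddCommGroup V] [AddCommGroup W]
    (u : α → V) (A : η → W)
    (hEfin : M.E.Finite)
    (hcritM : ∀ I, I ⊆ M.E → (M.Indep I ↔ ∀ s : Finset α, ↑s ⊆ I → s.Nonempty → ∑ i ∈ s, u i ≠ 0))
    (hcritN : ∀ J : Set η, (N.Indep J ↔ ∀ t : Finset η, ↑t ⊆ J → t.Nonempty → ∑ i ∈ t, A i ≠ 0))
    (φ : α → η) (hinj : Set.InjOn φ M.E)
    (hcomm : ∀ s : Finset α, ↑s ⊆ M.E → ((∑ i ∈ s, u i = 0) ↔ (∑ i ∈ s, A (φ i) = 0)))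
    (hsurj : φ '' M.E = Set.univ) :
    IsIsoTo M N φ := by
  have h := iso_of_crit u A hEfin hcritM hcritN φ hinj hcomm
  rwa [hsurj, ← hNE, Matroid.restrict_ground_eq_self] at h

lemma subset_sum_eval {α : Type*} [DecidableEq α] {r : ℕ}
    (u : α → Fin r → ZMod 2) (g : Fin r → α) (hginj : Function.Injective g)
    (hsingle : ∀ j, u (g j) = Pi.single j 1)
    (X : Finset α) (T : Finset (Fin r)) (hX : ∀ j, g j ∉ X)
    (s : Finset α) (hs : s ⊆ X ∪ T.image g) (k : Fin r) :
    ∑ x ∈ s, u x k = (∑ x ∈ X, if x ∈ s then u x k else 0) +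
      (if k ∈ T ∧ g k ∈ s then 1 else 0) := by
  classical
  have hdisj : Disjoint X (T.image g) := by
    rw [Finset.disjoint_left]
    intro x hx hx'
    obtain ⟨j, _, rfl⟩ := Finset.mem_image.1 hx'
    exact hX j hx
  have h1 : ∑ x ∈ s, u x k = ∑ x ∈ X ∪ T.image g, (if x ∈ s then u x k else 0) := by
    rw [Finset.sum_ite_mem, Finset.inter_eq_right.2 hs]
  rw [h1, Finset.sum_union hdisj]
  congr 1
  rw [Finset.sum_image (fun a _ b _ hab => hginj hab)]
  by_cases hk : k ∈ T
  · rw [Finset.sum_eq_single_of_mem k hk (fun j _ hjk => by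
      by_cases h : g j ∈ s
      · rw [if_pos h, hsingle j, Pi.single_apply, if_neg (fun hh => hjk hh.symm)]
      · rw [if_neg h])]
    by_cases hgk : g k ∈ s
    · rw [if_pos hgk, if_pos ⟨hk, hgk⟩, hsingle k, Pi.single_apply, if_pos rfl]
    · rw [if_neg hgk, if_neg (fun h => hgk h.2)]
  · rw [if_neg (fun h => hk h.1), Finset.sum_eq_zero]
    intro j hj
    have hjk : j ≠ k := fun h => hk (h ▸ hj)
    by_cases h : g j ∈ s
    · rw [if_pos h, hsingle j, Pi.single_apply, if_neg (fun hh => hjk hh.symm)]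
    · rw [if_neg h]

end Extra

set_option maxHeartbeats 4000000 in
/-- first case of the proof of Theorem 1.1: if a simple binary
matroid of rank `r ≥ 2` has a loose element `e` and a basis `B` with `B ∪ {e}` a
circuit, then it is isomorphic to `L_r` (with `e` corresponding to the all-ones
column), or to a restriction of `M_r` containing `z` with `e` corresponding to `z`. -/
theorem binary_loose_spanning_case {α : Type*} (r : ℕ) (hr : 2 ≤ r)
    (M : Matroid α) (hsimple : Simple M) (hbinary : Representable M (ZMod 2))
    (hrank : rank M = r) (e : α) (hloose : Loose M e)
    (B : Set α) (hB : M.IsBase B) (hcirc : Circuit M (insert e B)) :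
    (∃ L : Matroid (Fin r ⊕ Fin 4),
        IsVectorMatroidOn (ZMod 2) (LrMatrix r) L ∧
        ∃ φ, IsIsoTo M L φ ∧ φ e = Sum.inr 0) ∨
    (∃ MM : Matroid (Fin r ⊕ Fin r),
        IsVectorMatroidOn (ZMod 2) (MrMatrix r) MM ∧
        ∃ R : Set (Fin r ⊕ Fin r), Sum.inr (⟨0, by omega⟩ : Fin r) ∈ R ∧
          ∃ φ, IsIsoTo M (MM ↾ R) φ ∧ φ e = Sum.inr (⟨0, by omega⟩ : Fin r)) := by
  classical
  obtain ⟨ι, v, hv⟩ := hbinary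
  have hEe : e ∈ M.E := hloose.1
  have hBE : B ⊆ M.E := hB.subset_ground
  have heB : e ∉ B := by
    intro h
    rw [Set.insert_eq_self.2 h] at hcirc
    exact hcirc.1.not_indep hB.indep
  have hcard : B.ncard = r := by
    have hset : {n | ∃ B', M.IsBase B' ∧ B'.ncard = n} = {B.ncard} := by
      ext n
      constructor
      · rintro ⟨B', hB', rfl⟩; exact hB'.ncard_eq_ncard_of_isBase hB
      · rintro rfl; exact ⟨B, hB, rfl⟩
    rw [rank, hset, csInf_singleton] at hrank
    exact hrank
  have hBfin : B.Finite := by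
    by_contra h
    rw [Set.Infinite.ncard h] at hcard
    omega
  haveI : Fintype B := hBfin.fintype
  have hcardB : Fintype.card B = r := by
    rw [← Set.toFinset_card, ← Set.ncard_eq_toFinset_card']; exact hcard
  obtain gE := Fintype.equivFinOfCardEq hcardB
  set g : Fin r → α := fun i => (gE.symm i : α) with hg_def
  have hgB : ∀ i, g i ∈ B := fun i => (gE.symm i).2
  have hginj : Function.Injective g := fun i j h => gE.symm.injective (Subtype.ext h)
  have hgE : ∀ i, gE (gE.symm i) = i := fun i => gE.apply_symm_apply i
  have hgval : ∀ (x : α) (hx : x ∈ B), g (gE ⟨x, hx⟩) = x := by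
    intro x hx
    show ((gE.symm (gE ⟨x, hx⟩) : B) : α) = x
    rw [gE.symm_apply_apply]
  -- representation
  have hvB : LinearIndependent (ZMod 2) fun x : B => v x.1 := (hv B hBE).1 hB.indep
  set w : Fin r → (ι → ZMod 2) := fun i => v (g i) with hw_def
  have hw : LinearIndependent (ZMod 2) w := hvB.comp gE.symm gE.symm.injective
  set P := Submodule.span (ZMod 2) (Set.range w) with hP_def
  have hrange : Set.range w = v '' B := by
    ext y
    constructor
    · rintro ⟨i, rfl⟩; exact ⟨g i, hgB i, rfl⟩
    · rintro ⟨b, hb, rfl⟩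
      exact ⟨gE ⟨b, hb⟩, by show v (g (gE ⟨b, hb⟩)) = v b; rw [hgval b hb]⟩
  have hmemP : ∀ x ∈ M.E, v x ∈ P := by
    intro x hx
    by_cases hxB : x ∈ B
    · apply Submodule.subset_span
      rw [hrange]; exact ⟨x, hxB, rfl⟩
    · have hdep := hB.insert_dep ⟨hx, hxB⟩
      have hnind : ¬ M.Indep (insert x B) := hdep.not_indep
      rw [hv _ (Set.insert_subset hx hBE)] at hnind
      change ¬ LinearIndepOn (ZMod 2) v (insert x B) at hnind
      rw [linearIndepOn_insert hxB] at hnind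
      push_neg at hnind
      have h2 := hnind hvB
      rw [hP_def, hrange]
      exact h2
  set u : α → (Fin r → ZMod 2) := fun x => coordFun hw (v x) with hu_def
  -- sum transfer
  have husum : ∀ s : Finset α, ↑s ⊆ M.E → ((∑ i ∈ s, u i = 0) ↔ (∑ i ∈ s, v i = 0)) := by
    intro s hs
    have hmem : ∀ x ∈ s, v x ∈ P := fun x hx => hmemP x (hs hx)
    have hsum := coordFun_sum hw v s hmem
    constructor
    · intro h
      rw [hu_def] at h
      rw [h] at hsum
      exact (coordFun_eq_zero_iff hw (Submodule.sum_mem _ hmem)).1 hsum.symm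
    · intro h
      rw [hu_def, hsum, h]
      exact (coordFun_eq_zero_iff hw (Submodule.zero_mem _)).2 rfl
  -- independence criterion
  have hcrit : ∀ I : Set α, I ⊆ M.E → I.Finite →
      (M.Indep I ↔ ∀ s : Finset α, ↑s ⊆ I → s.Nonempty → ∑ i ∈ s, u i ≠ 0) := by
    intro I hIE hIfin
    rw [hv I hIE, z2_li_set_iff v hIfin]
    constructor
    · intro h s hsI hsne hsum
      exact h s hsI hsne ((husum s (hsI.trans hIE)).1 hsum)
    · intro h s hsI hsne hsum
      exact h s hsI hsne ((husum s (hsI.trans hIE)).2 hsum)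
  -- injectivity on ground set
  have hvinj : Set.InjOn v M.E := by
    intro x hx y hy hxy
    by_contra hne
    have hpair := hsimple x hx y hy
    rw [hv _ (by rw [Set.insert_subset_iff, Set.singleton_subset_iff]; exact ⟨hx, hy⟩)] at hpair
    have hyy : y ∈ ({x, y} : Set α) := Set.mem_insert_of_mem _ rfl
    have hxx : x ∈ ({x, y} : Set α) := Set.mem_insert _ _
    have := hpair.injective (a₁ := ⟨x, hxx⟩) (a₂ := ⟨y, hyy⟩) hxy
    exact hne (congrArg Subtype.val this)
  have huinj : Set.InjOn u M.E := fun x hx y hy hxy =>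
    hvinj hx hy (coordFun_injOn hw (hmemP x hx) (hmemP y hy) hxy)
  have hEfin : M.E.Finite := Set.Finite.of_finite_image (Set.toFinite _) huinj
  have hcritM : ∀ I : Set α, I ⊆ M.E →
      (M.Indep I ↔ ∀ s : Finset α, ↑s ⊆ I → s.Nonempty → ∑ i ∈ s, u i ≠ 0) :=
    fun I hIE => hcrit I hIE (hEfin.subset hIE)
  have hug : ∀ i, u (g i) = Pi.single i 1 := fun i => coordFun_w hw i
  have hu0 : ∀ x ∈ M.E, u x ≠ 0 := by
    intro x hx h0
    have hsing := hsimple x hx x hx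
    rw [Set.pair_eq_singleton] at hsing
    have := (hcritM {x} (Set.singleton_subset_iff.2 hx)).1 hsing {x}
      (by simp) ⟨x, Finset.mem_singleton_self x⟩
    rw [Finset.sum_singleton, h0] at this
    exact this rfl
  -- supports
  set SUPP : α → Finset (Fin r) := fun x => Finset.univ.filter (fun i => u x i ≠ 0) with hSUPP_def
  have husupp : ∀ x, u x = ∑ i ∈ SUPP x, Pi.single i 1 := fun x => vec_eq_sum_supp (u x)
  have huval : ∀ x k, u x k = if k ∈ SUPP x then 1 else 0 := by
    intro x k
    by_cases hk : k ∈ SUPP x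
    · rw [if_pos hk]
      rcases zmod2_cases (u x k) with h | h
      · exact absurd h (by simpa [hSUPP_def] using hk)
      · exact h
    · rw [if_neg hk]
      by_contra h
      exact hk (by simp [hSUPP_def, h])
  have hsupp_inj : ∀ x ∈ M.E, ∀ y ∈ M.E, SUPP x = SUPP y → x = y := by
    intro x hx y hy hxy
    refine huinj hx hy ?_
    funext k
    rw [huval, huval, hxy]
  have hsuppg : ∀ i, SUPP (g i) = {i} := by
    intro i
    ext j
    simp only [hSUPP_def, Finset.mem_filter, Finset.mem_univ, true_and, Finset.mem_singleton,
      hug i, Pi.single_apply]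
    constructor
    · intro h; by_contra hne; exact h (if_neg (fun hh => hne hh))
    · rintro rfl; simp
  -- the support of e is everything
  have hue : ∀ k, u e k = 1 := by
    have hSe : SUPP e = Finset.univ := by
      set t : Finset α := insert e ((SUPP e).image g) with ht_def
      have himB : ∀ y ∈ (SUPP e).image g, y ∈ B := by
        intro y hy
        obtain ⟨i, _, rfl⟩ := Finset.mem_image.1 hy
        exact hgB i
      have het : e ∉ (SUPP e).image g := fun h => heB (himB e h)
      have htE : ↑t ⊆ M.E := by
        intro x hx
        rcases Finset.mem_insert.1 (Finset.mem_coe.1 hx) with rfl | hx'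
        · exact hEe
        · exact hBE (himB x hx')
      have hsum : ∑ x ∈ t, u x = 0 := by
        rw [ht_def, Finset.sum_insert het, Finset.sum_image
          (fun a _ b _ hab => hginj hab)]
        have : ∑ i ∈ SUPP e, u (g i) = u e := by
          rw [Finset.sum_congr rfl (fun i _ => hug i)]
          exact (husupp e).symm
        rw [this]
        exact z2_add_self _
      have hdep : M.Dep ↑t := by
        rw [Matroid.dep_iff]
        refine ⟨fun hind => ?_, htE⟩
        exact ((hcritM ↑t htE).1 hind) t Finset.Subset.rfl
          ⟨e, Finset.mem_insert_self _ _⟩ hsum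
      have hsub : (↑t : Set α) ⊆ insert e B := by
        intro x hx
        rcases Finset.mem_insert.1 (Finset.mem_coe.1 hx) with rfl | hx'
        · exact Set.mem_insert _ _
        · exact Set.mem_insert_of_mem _ (himB x hx')
      have heq := hcirc.2 ↑t hdep hsub
      -- B ⊆ image
      have hBsub : B ⊆ g '' ↑(SUPP e) := by
        intro b hb
        have : b ∈ (↑t : Set α) := by rw [heq]; exact Set.mem_insert_of_mem _ hb
        rcases Finset.mem_insert.1 (Finset.mem_coe.1 this) with rfl | hb'
        · exact absurd hb heB
        · obtain ⟨i, hi, rfl⟩ := Finset.mem_image.1 hb'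
          exact ⟨i, Finset.mem_coe.2 hi, rfl⟩
      ext j
      simp only [Finset.mem_univ, iff_true]
      obtain ⟨i, hi, hgi⟩ := hBsub (hgB j)
      rwa [← hginj hgi]
    intro k
    rw [huval, hSe, if_pos (Finset.mem_univ k)]
  have hsupp_ne_univ : ∀ f ∈ M.E, f ≠ e → SUPP f ≠ Finset.univ := by
    intro f hf hfe hS
    refine hfe (huinj hf hEe ?_)
    funext k
    rw [huval, hS, if_pos (Finset.mem_univ k), hue]
  -- every non-basis, non-e element has support of size exactly 2
  have hclass : ∀ f ∈ M.E, f ∉ B → f ≠ e → (SUPP f).card = 2 := by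
    intro f hf hfB hfe
    have hne : (SUPP f).Nonempty := by
      rw [Finset.nonempty_iff_ne_empty]
      intro h0
      apply hu0 f hf
      rw [husupp f, h0, Finset.sum_empty]
    have hcard1 : (SUPP f).card ≠ 1 := by
      intro h1
      obtain ⟨i, hi⟩ := Finset.card_eq_one.1 h1
      apply hfB
      have : f = g i := hsupp_inj f hf (g i) (hBE (hgB i)) (by rw [hi, hsuppg])
      rw [this]; exact hgB i
    have hcard_le : (SUPP f).card ≤ 2 := by
      by_contra hgt
      push_neg at hgt
      set T : Finset (Fin r) := (SUPP f)ᶜ with hT_def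
      set D₀ : Finset α := ({e, f} : Finset α) ∪ T.image g with hD_def
      have hef : e ≠ f := fun h => hfe h.symm
      have hXim : ∀ j, g j ∉ ({e, f} : Finset α) := by
        intro j hj
        rcases Finset.mem_insert.1 hj with h | h
        · exact heB (h ▸ hgB j)
        · exact hfB ((Finset.mem_singleton.1 h) ▸ hgB j)
      have hD₀E : ↑D₀ ⊆ M.E := by
        intro x hx
        rcases Finset.mem_union.1 (Finset.mem_coe.1 hx) with h | h
        · rcases Finset.mem_insert.1 h with rfl | h'
          · exact hEe
          · rw [Finset.mem_singleton.1 h']; exact hf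
        · obtain ⟨j, _, rfl⟩ := Finset.mem_image.1 h
          exact hBE (hgB j)
      have heD : e ∈ D₀ := Finset.mem_union_left _ (Finset.mem_insert_self _ _)
      have hfD : f ∈ D₀ := Finset.mem_union_left _
        (Finset.mem_insert_of_mem (Finset.mem_singleton_self f))
      have hgD : ∀ j ∈ T, g j ∈ D₀ :=
        fun j hj => Finset.mem_union_right _ (Finset.mem_image_of_mem g hj)
      -- pointwise evaluation of subset sums
      have heval : ∀ s : Finset α, s ⊆ D₀ → ∀ k, ∑ x ∈ s, u x k =
          ((if e ∈ s then u e k else 0) + (if f ∈ s then u f k else 0)) +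
            (if k ∈ T ∧ g k ∈ s then 1 else 0) := by
        intro s hsD k
        rw [subset_sum_eval u g hginj hug {e, f} T hXim s hsD k, Finset.sum_pair hef]
      -- the only nonempty subset of D₀ with zero sum is D₀ itself
      have hclaim : ∀ s : Finset α, s ⊆ D₀ → s.Nonempty → ∑ x ∈ s, u x = 0 → s = D₀ := by
        intro s hsD hsne hsum
        have hk : ∀ k, ((if e ∈ s then u e k else 0) + (if f ∈ s then u f k else 0)) +
            (if k ∈ T ∧ g k ∈ s then 1 else 0) = 0 := by
          intro k
          rw [← heval s hsD k]
          rw [← Finset.sum_apply]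
          rw [hsum]
          rfl
        obtain ⟨k₀, hk₀⟩ := hne
        have hk₀T : k₀ ∉ T := by rw [hT_def, Finset.mem_compl, not_not]; exact hk₀
        have hiff : (e ∈ s) ↔ (f ∈ s) := by
          have h0 := hk k₀
          have hnT : ¬ (k₀ ∈ T ∧ g k₀ ∈ s) := fun h => hk₀T h.1
          rw [if_neg hnT, hue k₀, huval f k₀, if_pos hk₀] at h0
          by_cases he' : e ∈ s
          · by_cases hf' : f ∈ s
            · exact iff_of_true he' hf'
            · rw [if_pos he', if_neg hf'] at h0
              exact absurd h0 (by decide)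
          · by_cases hf' : f ∈ s
            · rw [if_neg he', if_pos hf'] at h0
              exact absurd h0 (by decide)
            · exact iff_of_false he' hf'
        by_cases hes : e ∈ s
        · -- s = D₀
          have hfs : f ∈ s := hiff.1 hes
          refine Finset.Subset.antisymm hsD ?_
          intro x hx
          rcases Finset.mem_union.1 hx with h | h
          · rcases Finset.mem_insert.1 h with rfl | h'
            · exact hes
            · rw [Finset.mem_singleton.1 h']; exact hfs
          · obtain ⟨j, hjT, rfl⟩ := Finset.mem_image.1 h
            have h0 := hk j
            have hjS : j ∉ SUPP f := by rwa [← Finset.mem_compl, ← hT_def]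
            rw [if_pos hes, hue j, huval f j, if_neg hjS, if_pos hfs] at h0
            by_cases hgj : g j ∈ s
            · exact hgj
            · exfalso
              have hnT : ¬ (j ∈ T ∧ g j ∈ s) := fun h => hgj h.2
              rw [if_neg hnT] at h0
              exact absurd h0 (by decide)
        · exfalso
          have hfs : f ∉ s := fun h => hes (hiff.2 h)
          have hnog : ∀ j ∈ T, g j ∉ s := by
            intro j hjT hgj
            have h0 := hk j
            rw [if_neg hes, if_neg hfs, if_pos ⟨hjT, hgj⟩] at h0
            exact absurd h0 (by decide)
          obtain ⟨x, hx⟩ := hsne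
          rcases Finset.mem_union.1 (hsD hx) with h | h
          · rcases Finset.mem_insert.1 h with rfl | h'
            · exact hes hx
            · rw [Finset.mem_singleton.1 h'] at hx; exact hfs hx
          · obtain ⟨j, hjT, rfl⟩ := Finset.mem_image.1 h
            exact hnog j hjT hx
      -- D₀ is dependent
      have hsumD : ∑ x ∈ D₀, u x = 0 := by
        funext k
        simp only [Pi.zero_apply]
        rw [Finset.sum_apply, heval D₀ Finset.Subset.rfl k, if_pos heD, if_pos hfD,
          hue k, huval f k]
        by_cases hkS : k ∈ SUPP f
        · have hkT : ¬ (k ∈ T ∧ g k ∈ D₀) := fun h => by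
            have : k ∉ SUPP f := by
              have := h.1
              rwa [hT_def, Finset.mem_compl] at this
            exact this hkS
          rw [if_pos hkS, if_neg hkT]
          decide
        · have hkT : k ∈ T := by rwa [hT_def, Finset.mem_compl]
          rw [if_neg hkS, if_pos ⟨hkT, hgD k hkT⟩]
          decide
      have hdepD : M.Dep ↑D₀ := by
        rw [Matroid.dep_iff]
        exact ⟨fun hind => ((hcritM ↑D₀ hD₀E).1 hind) D₀ Finset.Subset.rfl ⟨e, heD⟩ hsumD, hD₀E⟩
      have hcircD : Circuit M ↑D₀ := by
        refine ⟨hdepD, ?_⟩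
        intro D' hD' hsub
        have hnind := hD'.not_indep
        rw [hcritM D' hD'.subset_ground] at hnind
        push_neg at hnind
        obtain ⟨s, hsD', hsne, hsum⟩ := hnind
        have hsD : s ⊆ D₀ := fun x hx => Finset.mem_coe.1 (hsub (hsD' (Finset.mem_coe.2 hx)))
        have hseq := hclaim s hsD hsne hsum
        refine Set.Subset.antisymm hsub ?_
        rw [← hseq]
        exact hsD'
      have hcount := hloose.2 ↑D₀ hcircD (Finset.mem_coe.2 heD)
      rw [hrank, Set.ncard_coe_finset] at hcount
      have hdisjD : Disjoint ({e, f} : Finset α) (T.image g) := by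
        rw [Finset.disjoint_left]
        intro x hx hx'
        obtain ⟨j, _, rfl⟩ := Finset.mem_image.1 hx'
        exact hXim j hx
      have hcardD : D₀.card = 2 + T.card := by
        rw [hD_def, Finset.card_union_of_disjoint hdisjD, Finset.card_pair hef,
          Finset.card_image_of_injective _ hginj]
      have hTcard : T.card = r - (SUPP f).card := by
        rw [hT_def, Finset.card_compl, Fintype.card_fin]
      have hSle : (SUPP f).card ≤ r := by
        have h5 := Finset.card_le_univ (SUPP f)
        rwa [Fintype.card_fin] at h5
      omega
    have hpos : 0 < (SUPP f).card := Finset.card_pos.2 hne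
    omega
  -- supports of distinct non-basis elements intersect
  have hInt : ∀ f ∈ M.E, f ∉ B → f ≠ e → ∀ f' ∈ M.E, f' ∉ B → f' ≠ e →
      ∃ k, k ∈ SUPP f ∧ k ∈ SUPP f' := by
    intro f hf hfB hfe f' hf' hf'B hf'e
    by_cases hff' : f = f'
    · subst hff'
      have h2 := hclass f hf hfB hfe
      obtain ⟨k, hk⟩ := Finset.card_pos.1 (by omega : 0 < (SUPP f).card)
      exact ⟨k, hk, hk⟩
    by_contra hdisj
    push_neg at hdisj
    have hdisjS : ∀ k, k ∈ SUPP f → k ∉ SUPP f' := hdisj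
    set T : Finset (Fin r) := (SUPP f ∪ SUPP f')ᶜ with hT_def
    set D₁ : Finset α := ({e, f, f'} : Finset α) ∪ T.image g with hD_def
    have hef : e ≠ f := fun h => hfe h.symm
    have hef' : e ≠ f' := fun h => hf'e h.symm
    have hXmem : ∀ x ∈ ({e, f, f'} : Finset α), x ∈ M.E := by
      intro x hx
      rcases Finset.mem_insert.1 hx with rfl | hx'
      · exact hEe
      rcases Finset.mem_insert.1 hx' with rfl | hx''
      · exact hf
      · rw [Finset.mem_singleton.1 hx'']; exact hf'
    have hXnB : ∀ x ∈ ({e, f, f'} : Finset α), x ∉ B := by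
      intro x hx
      rcases Finset.mem_insert.1 hx with rfl | hx'
      · exact heB
      rcases Finset.mem_insert.1 hx' with rfl | hx''
      · exact hfB
      · rw [Finset.mem_singleton.1 hx'']; exact hf'B
    have hXim : ∀ j, g j ∉ ({e, f, f'} : Finset α) := fun j hj => hXnB _ hj (hgB j)
    have hD₁E : ↑D₁ ⊆ M.E := by
      intro x hx
      rcases Finset.mem_union.1 (Finset.mem_coe.1 hx) with h | h
      · exact hXmem x h
      · obtain ⟨j, _, rfl⟩ := Finset.mem_image.1 h
        exact hBE (hgB j)
    have heD : e ∈ D₁ := Finset.mem_union_left _ (Finset.mem_insert_self _ _)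
    have hfD : f ∈ D₁ := Finset.mem_union_left _
      (Finset.mem_insert_of_mem (Finset.mem_insert_self _ _))
    have hf'D : f' ∈ D₁ := Finset.mem_union_left _
      (Finset.mem_insert_of_mem (Finset.mem_insert_of_mem (Finset.mem_singleton_self _)))
    have hgD : ∀ j ∈ T, g j ∈ D₁ :=
      fun j hj => Finset.mem_union_right _ (Finset.mem_image_of_mem g hj)
    have hfnotpair : f ∉ ({f'} : Finset α) := fun h => hff' (Finset.mem_singleton.1 h)
    have henotpair : e ∉ ({f, f'} : Finset α) := by
      intro h
      rcases Finset.mem_insert.1 h with h' | h'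
      · exact hef h'
      · exact hef' (Finset.mem_singleton.1 h')
    have heval : ∀ s : Finset α, s ⊆ D₁ → ∀ k, ∑ x ∈ s, u x k =
        (((if e ∈ s then u e k else 0) + ((if f ∈ s then u f k else 0) +
          (if f' ∈ s then u f' k else 0)))) + (if k ∈ T ∧ g k ∈ s then 1 else 0) := by
      intro s hsD k
      rw [subset_sum_eval u g hginj hug {e, f, f'} T hXim s hsD k,
        Finset.sum_insert henotpair, Finset.sum_pair hff']
    have hclaim : ∀ s : Finset α, s ⊆ D₁ → s.Nonempty → ∑ x ∈ s, u x = 0 → s = D₁ := by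
      intro s hsD hsne hsum
      have hk : ∀ k, (((if e ∈ s then u e k else 0) + ((if f ∈ s then u f k else 0) +
          (if f' ∈ s then u f' k else 0)))) + (if k ∈ T ∧ g k ∈ s then 1 else 0) = 0 := by
        intro k
        rw [← heval s hsD k, ← Finset.sum_apply, hsum]
        rfl
      obtain ⟨k₀, hk₀⟩ := Finset.card_pos.1 (by rw [hclass f hf hfB hfe]; omega)
      obtain ⟨k₁, hk₁⟩ := Finset.card_pos.1 (by rw [hclass f' hf' hf'B hf'e]; omega)
      have hk₀' : k₀ ∉ SUPP f' := hdisjS k₀ hk₀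
      have hk₁' : k₁ ∉ SUPP f := fun h => hdisjS k₁ h hk₁
      have hk₀T : ¬ (k₀ ∈ T ∧ g k₀ ∈ s) := by
        rintro ⟨h, -⟩
        rw [hT_def, Finset.mem_compl] at h
        exact h (Finset.mem_union_left _ hk₀)
      have hk₁T : ¬ (k₁ ∈ T ∧ g k₁ ∈ s) := by
        rintro ⟨h, -⟩
        rw [hT_def, Finset.mem_compl] at h
        exact h (Finset.mem_union_right _ hk₁)
      have hiff1 : (e ∈ s) ↔ (f ∈ s) := by
        have h0 := hk k₀
        rw [if_neg hk₀T, hue k₀, huval f k₀, if_pos hk₀, huval f' k₀, if_neg hk₀'] at h0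
        by_cases he' : e ∈ s
        · by_cases hf1 : f ∈ s
          · exact iff_of_true he' hf1
          · rw [if_pos he', if_neg hf1] at h0
            by_cases hf2 : f' ∈ s
            · rw [if_pos hf2] at h0; exact absurd h0 (by decide)
            · rw [if_neg hf2] at h0; exact absurd h0 (by decide)
        · by_cases hf1 : f ∈ s
          · rw [if_neg he', if_pos hf1] at h0
            by_cases hf2 : f' ∈ s
            · rw [if_pos hf2] at h0; exact absurd h0 (by decide)
            · rw [if_neg hf2] at h0; exact absurd h0 (by decide)
          · exact iff_of_false he' hf1
      have hiff2 : (e ∈ s) ↔ (f' ∈ s) := by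
        have h0 := hk k₁
        rw [if_neg hk₁T, hue k₁, huval f k₁, if_neg hk₁', huval f' k₁, if_pos hk₁] at h0
        by_cases he' : e ∈ s
        · by_cases hf2 : f' ∈ s
          · exact iff_of_true he' hf2
          · rw [if_pos he', if_neg hf2] at h0
            by_cases hf1 : f ∈ s
            · rw [if_pos hf1] at h0; exact absurd h0 (by decide)
            · rw [if_neg hf1] at h0; exact absurd h0 (by decide)
        · by_cases hf2 : f' ∈ s
          · rw [if_neg he', if_pos hf2] at h0
            by_cases hf1 : f ∈ s
            · rw [if_pos hf1] at h0; exact absurd h0 (by decide)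
            · rw [if_neg hf1] at h0; exact absurd h0 (by decide)
          · exact iff_of_false he' hf2
      by_cases hes : e ∈ s
      · have hfs : f ∈ s := hiff1.1 hes
        have hf's : f' ∈ s := hiff2.1 hes
        refine Finset.Subset.antisymm hsD ?_
        intro x hx
        rcases Finset.mem_union.1 hx with h | h
        · rcases Finset.mem_insert.1 h with rfl | h'
          · exact hes
          rcases Finset.mem_insert.1 h' with rfl | h''
          · exact hfs
          · rw [Finset.mem_singleton.1 h'']; exact hf's
        · obtain ⟨j, hjT, rfl⟩ := Finset.mem_image.1 h
          have h0 := hk j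
          have hjT' := hjT
          rw [hT_def, Finset.mem_compl, Finset.mem_union] at hjT'
          push_neg at hjT'
          rw [if_pos hes, hue j, huval f j, if_neg hjT'.1, huval f' j, if_neg hjT'.2,
            if_pos hfs, if_pos hf's] at h0
          by_cases hgj : g j ∈ s
          · exact hgj
          · exfalso
            have hnT : ¬ (j ∈ T ∧ g j ∈ s) := fun h => hgj h.2
            rw [if_neg hnT] at h0
            exact absurd h0 (by decide)
      · exfalso
        have hfs : f ∉ s := fun h => hes (hiff1.2 h)
        have hf's : f' ∉ s := fun h => hes (hiff2.2 h)
        have hnog : ∀ j ∈ T, g j ∉ s := by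
          intro j hjT hgj
          have h0 := hk j
          rw [if_neg hes, if_neg hfs, if_neg hf's, if_pos ⟨hjT, hgj⟩] at h0
          exact absurd h0 (by decide)
        obtain ⟨x, hx⟩ := hsne
        rcases Finset.mem_union.1 (hsD hx) with h | h
        · rcases Finset.mem_insert.1 h with rfl | h'
          · exact hes hx
          rcases Finset.mem_insert.1 h' with rfl | h''
          · exact hfs hx
          · rw [Finset.mem_singleton.1 h''] at hx; exact hf's hx
        · obtain ⟨j, hjT, rfl⟩ := Finset.mem_image.1 h
          exact hnog j hjT hx
    have hsumD : ∑ x ∈ D₁, u x = 0 := by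
      funext k
      simp only [Pi.zero_apply]
      rw [Finset.sum_apply, heval D₁ Finset.Subset.rfl k, if_pos heD, if_pos hfD,
        if_pos hf'D, hue k, huval f k, huval f' k]
      by_cases hk1 : k ∈ SUPP f
      · have hk2 : k ∉ SUPP f' := hdisjS k hk1
        have hkT : ¬ (k ∈ T ∧ g k ∈ D₁) := by
          rintro ⟨h, -⟩
          rw [hT_def, Finset.mem_compl] at h
          exact h (Finset.mem_union_left _ hk1)
        rw [if_pos hk1, if_neg hk2, if_neg hkT]
        decide
      · by_cases hk2 : k ∈ SUPP f'
        · have hkT : ¬ (k ∈ T ∧ g k ∈ D₁) := by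
            rintro ⟨h, -⟩
            rw [hT_def, Finset.mem_compl] at h
            exact h (Finset.mem_union_right _ hk2)
          rw [if_neg hk1, if_pos hk2, if_neg hkT]
          decide
        · have hkT : k ∈ T := by
            rw [hT_def, Finset.mem_compl, Finset.mem_union]
            rintro (h | h)
            · exact hk1 h
            · exact hk2 h
          rw [if_neg hk1, if_neg hk2, if_pos ⟨hkT, hgD k hkT⟩]
          decide
    have hdepD : M.Dep ↑D₁ := by
      rw [Matroid.dep_iff]
      exact ⟨fun hind => ((hcritM ↑D₁ hD₁E).1 hind) D₁ Finset.Subset.rfl ⟨e, heD⟩ hsumD, hD₁E⟩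
    have hcircD : Circuit M ↑D₁ := by
      refine ⟨hdepD, ?_⟩
      intro D' hD' hsub
      have hnind := hD'.not_indep
      rw [hcritM D' hD'.subset_ground] at hnind
      push_neg at hnind
      obtain ⟨s, hsD', hsne, hsum⟩ := hnind
      have hsD : s ⊆ D₁ := fun x hx => Finset.mem_coe.1 (hsub (hsD' (Finset.mem_coe.2 hx)))
      have hseq := hclaim s hsD hsne hsum
      refine Set.Subset.antisymm hsub ?_
      rw [← hseq]
      exact hsD'
    have hcount := hloose.2 ↑D₁ hcircD (Finset.mem_coe.2 heD)
    rw [hrank, Set.ncard_coe_finset] at hcount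
    have hdisjD : Disjoint ({e, f, f'} : Finset α) (T.image g) := by
      rw [Finset.disjoint_left]
      intro x hx hx'
      obtain ⟨j, _, rfl⟩ := Finset.mem_image.1 hx'
      exact hXim j hx
    have hcardX : ({e, f, f'} : Finset α).card = 3 := by
      rw [Finset.card_insert_of_notMem henotpair, Finset.card_pair hff']
    have hcardD : D₁.card = 3 + T.card := by
      rw [hD_def, Finset.card_union_of_disjoint hdisjD, hcardX,
        Finset.card_image_of_injective _ hginj]
    have hcardU : (SUPP f ∪ SUPP f').card = 4 := by
      rw [Finset.card_union_of_disjoint (Finset.disjoint_left.2 hdisjS),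
        hclass f hf hfB hfe, hclass f' hf' hf'B hf'e]
    have hTcard : T.card = r - 4 := by
      rw [hT_def, Finset.card_compl, Fintype.card_fin, hcardU]
    have hUle : (SUPP f ∪ SUPP f').card ≤ r := by
      have h5 := Finset.card_le_univ (SUPP f ∪ SUPP f')
      rwa [Fintype.card_fin] at h5
    omega
  -- criterion for vector matroids
  have h0r : (0 : ℕ) < r := by omega
  set i0 : Fin r := ⟨0, h0r⟩ with hi0_def
  by_cases hstar : ∃ p : Fin r, ∀ x ∈ M.E, x ∉ B → x ≠ e → p ∈ SUPP x
  · -- the M_r (star) case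
    right
    obtain ⟨p, hp⟩ := hstar
    set π : Equiv.Perm (Fin r) := Equiv.swap i0 p with hπ_def
    have hπp : π p = i0 := Equiv.swap_apply_right i0 p
    have hπsymm : π.symm = π := by rw [hπ_def]; exact Equiv.symm_swap i0 p
    set qf : α → Fin r := fun x => WithBot.unbotD i0 ((SUPP x).erase p).min with hqf_def
    have hedge : ∀ x ∈ M.E, x ∉ B → x ≠ e → SUPP x = {p, qf x} ∧ qf x ≠ p := by
      intro x hx hxB hxe
      obtain ⟨a, b, hab, hS⟩ := Finset.card_eq_two.1 (hclass x hx hxB hxe)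
      have hpS := hp x hx hxB hxe
      rw [hS, Finset.mem_insert, Finset.mem_singleton] at hpS
      rcases hpS with rfl | rfl
      · have herase : (SUPP x).erase p = {b} := by
          rw [hS, Finset.erase_insert (fun h => hab (Finset.mem_singleton.1 h))]
        have hq : qf x = b := by
          rw [hqf_def]
          simp only [herase, Finset.min_singleton]
          rfl
        exact ⟨by rw [hS, hq], by rw [hq]; exact fun h => hab h.symm⟩
      · have herase : (SUPP x).erase p = {a} := by
          rw [hS, Finset.pair_comm,
            Finset.erase_insert (fun h => hab (Finset.mem_singleton.1 h).symm)]
        have hq : qf x = a := by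
          rw [hqf_def]
          simp only [herase, Finset.min_singleton]
          rfl
        exact ⟨by rw [hS, hq, Finset.pair_comm], by rw [hq]; exact hab⟩
    set φ : α → (Fin r ⊕ Fin r) := fun x =>
      if x = e then Sum.inr i0
      else if hx : x ∈ B then Sum.inl (π (gE ⟨x, hx⟩))
      else Sum.inr (π (qf x)) with hφ_def
    have hφe : φ e = Sum.inr i0 := by rw [hφ_def]; simp
    have hφB : ∀ x, ∀ hx : x ∈ B, φ x = Sum.inl (π (gE ⟨x, hx⟩)) := by
      intro x hx
      have hxe : ¬ (x = e) := fun h => heB (h ▸ hx)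
      rw [hφ_def]
      simp only [if_neg hxe]
      rw [dif_pos hx]
    have hφg : ∀ i, φ (g i) = Sum.inl (π i) := by
      intro i
      rw [hφB (g i) (hgB i)]
      congr 1
      congr 1
      have : (⟨g i, hgB i⟩ : B) = gE.symm i := rfl
      rw [this, hgE]
    have hφedge : ∀ x ∈ M.E, x ∉ B → x ≠ e → φ x = Sum.inr (π (qf x)) := by
      intro x _ hxB hxe
      rw [hφ_def]
      simp only [if_neg hxe]
      rw [dif_neg hxB]
    have hπq : ∀ x ∈ M.E, x ∉ B → x ≠ e → π (qf x) ≠ i0 := by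
      intro x hx hxB hxe h
      rw [← hπp] at h
      exact (hedge x hx hxB hxe).2 (π.injective h)
    -- column identity
    have hcol : ∀ x ∈ M.E, ∀ k, MrMatrix r (φ x) k = u x (π.symm k) := by
      intro x hx k
      by_cases hxe : x = e
      · subst hxe
        rw [hφe, hue]
        show (if i0.val = 0 then (1 : ZMod 2) else if k.val = 0 ∨ k = i0 then 1 else 0) = 1
        rw [if_pos rfl]
      by_cases hxB : x ∈ B
      · rw [hφB x hxB]
        have hxg : x = g (gE ⟨x, hxB⟩) := (hgval x hxB).symm
        conv_rhs => rw [hxg]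
        rw [hug, Pi.single_apply]
        show (if k = π (gE ⟨x, hxB⟩) then (1 : ZMod 2) else 0) = _
        exact if_congr (Equiv.symm_apply_eq π).symm rfl rfl
      · rw [hφedge x hx hxB hxe, huval]
        have hv0 : (π (qf x)).val ≠ 0 := by
          intro h
          exact hπq x hx hxB hxe (Fin.ext h)
        show (if (π (qf x)).val = 0 then (1 : ZMod 2)
          else if k.val = 0 ∨ k = π (qf x) then 1 else 0) = _
        rw [if_neg hv0]
        refine (if_congr ?_ rfl rfl).symm
        rw [(hedge x hx hxB hxe).1, Finset.mem_insert, Finset.mem_singleton]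
        constructor
        · rintro (h | h)
          · left
            have : k = π p := by rw [← h, Equiv.apply_symm_apply]
            rw [this, hπp]
          · right
            rw [← h, Equiv.apply_symm_apply]
        · rintro (h | h)
          · left
            rw [show k = i0 from Fin.ext h, ← hπp, Equiv.symm_apply_apply]
          · right
            rw [h, Equiv.symm_apply_apply]
    -- sum transfer
    have hcomm : ∀ s : Finset α, ↑s ⊆ M.E →
        ((∑ i ∈ s, u i = 0) ↔ (∑ i ∈ s, MrMatrix r (φ i) = 0)) := by
      intro s hs
      have h1 : ∀ k, ∑ i ∈ s, MrMatrix r (φ i) k = ∑ i ∈ s, u i (π.symm k) :=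
        fun k => Finset.sum_congr rfl (fun x hx => hcol x (hs hx) k)
      constructor
      · intro h
        funext k
        rw [Finset.sum_apply, h1 k, ← Finset.sum_apply, h]
        rfl
      · intro h
        funext j
        have h2 := congrFun h (π j)
        rw [Finset.sum_apply, h1 (π j)] at h2
        rw [Finset.sum_apply]
        simp only [Equiv.symm_apply_apply] at h2
        exact h2
    -- injectivity
    have hinjφ : Set.InjOn φ M.E := by
      intro x hx y hy hxy
      by_cases hxe : x = e <;> by_cases hye : y = e
      · rw [hxe, hye]
      · exfalso
        subst hxe
        rw [hφe] at hxy
        by_cases hyB : y ∈ B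
        · rw [hφB y hyB] at hxy; cases hxy
        · rw [hφedge y hy hyB hye] at hxy
          exact hπq y hy hyB hye (Sum.inr_injective hxy).symm
      · exfalso
        subst hye
        rw [hφe] at hxy
        by_cases hxB : x ∈ B
        · rw [hφB x hxB] at hxy; cases hxy
        · rw [hφedge x hx hxB hxe] at hxy
          exact hπq x hx hxB hxe (Sum.inr_injective hxy)
      · by_cases hxB : x ∈ B <;> by_cases hyB : y ∈ B
        · rw [hφB x hxB, hφB y hyB] at hxy
          have h2 := gE.injective (π.injective (Sum.inl_injective hxy))
          exact congrArg Subtype.val h2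
        · rw [hφB x hxB, hφedge y hy hyB hye] at hxy; cases hxy
        · rw [hφedge x hx hxB hxe, hφB y hyB] at hxy; cases hxy
        · rw [hφedge x hx hxB hxe, hφedge y hy hyB hye] at hxy
          have hq : qf x = qf y := π.injective (Sum.inr_injective hxy)
          refine hsupp_inj x hx y hy ?_
          rw [(hedge x hx hxB hxe).1, (hedge y hy hyB hye).1, hq]
    -- assemble
    have hcritN : ∀ J : Set (Fin r ⊕ Fin r), ((vmatroid (MrMatrix r)).Indep J ↔
        ∀ t : Finset (Fin r ⊕ Fin r), ↑t ⊆ J → t.Nonempty → ∑ i ∈ t, MrMatrix r i ≠ 0) := by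
      intro J
      rw [vmatroid_indep, z2_li_set_iff (MrMatrix r) (Set.toFinite J)]
    have hiso := iso_of_crit u (MrMatrix r) hEfin hcritM hcritN φ hinjφ hcomm
    exact ⟨vmatroid (MrMatrix r), ⟨rfl, fun I => vmatroid_indep _ I⟩, φ '' M.E,
      ⟨e, hEe, hφe⟩, φ, hiso, hφe⟩
  · -- the L_r (triangle) case
    left
    push_neg at hstar
    have hother : ∀ x ∈ M.E, x ∉ B → x ≠ e → ∀ k ∈ SUPP x,
        ∃ m, SUPP x = {k, m} ∧ m ≠ k := by
      intro x hx hxB hxe k hk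
      obtain ⟨a, b, hab, hS⟩ := Finset.card_eq_two.1 (hclass x hx hxB hxe)
      rw [hS, Finset.mem_insert, Finset.mem_singleton] at hk
      rcases hk with rfl | rfl
      · exact ⟨b, hS, fun h => hab h.symm⟩
      · exact ⟨a, by rw [hS, Finset.pair_comm], fun h => hab h⟩
    obtain ⟨f1, hf1E, hf1B, hf1e, hf1i0⟩ := hstar i0
    obtain ⟨a, b, hab, hS1⟩ := Finset.card_eq_two.1 (hclass f1 hf1E hf1B hf1e)
    obtain ⟨f2, hf2E, hf2B, hf2e, hf2a⟩ := hstar a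
    have hbS2 : b ∈ SUPP f2 := by
      obtain ⟨k, hk1, hk2⟩ := hInt f1 hf1E hf1B hf1e f2 hf2E hf2B hf2e
      rw [hS1, Finset.mem_insert, Finset.mem_singleton] at hk1
      rcases hk1 with rfl | rfl
      · exact absurd hk2 hf2a
      · exact hk2
    obtain ⟨c, hS2, hcb⟩ := hother f2 hf2E hf2B hf2e b hbS2
    have hca : c ≠ a := by
      intro h
      apply hf2a
      rw [hS2, h]
      exact Finset.mem_insert_of_mem (Finset.mem_singleton_self a)
    obtain ⟨f3, hf3E, hf3B, hf3e, hf3b⟩ := hstar b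
    have haS3 : a ∈ SUPP f3 := by
      obtain ⟨k, hk1, hk2⟩ := hInt f1 hf1E hf1B hf1e f3 hf3E hf3B hf3e
      rw [hS1, Finset.mem_insert, Finset.mem_singleton] at hk1
      rcases hk1 with rfl | rfl
      · exact hk2
      · exact absurd hk2 hf3b
    have hcS3 : c ∈ SUPP f3 := by
      obtain ⟨k, hk1, hk2⟩ := hInt f2 hf2E hf2B hf2e f3 hf3E hf3B hf3e
      rw [hS2, Finset.mem_insert, Finset.mem_singleton] at hk1
      rcases hk1 with rfl | rfl
      · exact absurd hk2 hf3b
      · exact hk2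
    have hS3 : SUPP f3 = {a, c} := by
      obtain ⟨m, hS3', hm⟩ := hother f3 hf3E hf3B hf3e a haS3
      rw [hS3', Finset.mem_insert, Finset.mem_singleton] at hcS3
      rcases hcS3 with h | h
      · exact absurd h hca
      · rw [hS3', h]
    -- classification of edges
    have hcl3 : ∀ x ∈ M.E, x ∉ B → x ≠ e →
        SUPP x = {a, b} ∨ SUPP x = {a, c} ∨ SUPP x = {b, c} := by
      intro x hx hxB hxe
      have hcard2 := hclass x hx hxB hxe
      have hsub2 : ∀ y z : Fin r, y ≠ z → y ∈ SUPP x → z ∈ SUPP x → SUPP x = {y, z} := by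
        intro y z hyz hy hz
        have hsub : ({y, z} : Finset (Fin r)) ⊆ SUPP x :=
          Finset.insert_subset hy (Finset.singleton_subset_iff.2 hz)
        have hc2 : ({y, z} : Finset (Fin r)).card = 2 := Finset.card_pair hyz
        exact (Finset.eq_of_subset_of_card_le hsub (by omega)).symm
      by_cases haS : a ∈ SUPP x <;> by_cases hbS : b ∈ SUPP x <;>
        by_cases hcS : c ∈ SUPP x
      · exfalso
        have hsub : ({a, b, c} : Finset (Fin r)) ⊆ SUPP x := by
          refine Finset.insert_subset haS (Finset.insert_subset hbS ?_)
          exact Finset.singleton_subset_iff.2 hcS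
        have hc3 : ({a, b, c} : Finset (Fin r)).card = 3 := by
          rw [Finset.card_insert_of_notMem (by
            intro h
            rcases Finset.mem_insert.1 h with h' | h'
            · exact hab h'
            · exact hca (Finset.mem_singleton.1 h').symm), Finset.card_pair hcb.symm]
        have := Finset.card_le_card hsub
        omega
      · exact Or.inl (hsub2 a b hab haS hbS)
      · exact Or.inr (Or.inl (hsub2 a c (fun h => hca h.symm) haS hcS))
      · -- only a
        exfalso
        obtain ⟨k, hk1, hk2⟩ := hInt x hx hxB hxe f2 hf2E hf2B hf2e
        rw [hS2, Finset.mem_insert, Finset.mem_singleton] at hk2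
        rcases hk2 with rfl | rfl
        · exact hbS hk1
        · exact hcS hk1
      · exact Or.inr (Or.inr (hsub2 b c hcb.symm hbS hcS))
      · -- only b
        exfalso
        obtain ⟨k, hk1, hk2⟩ := hInt x hx hxB hxe f3 hf3E hf3B hf3e
        rw [hS3, Finset.mem_insert, Finset.mem_singleton] at hk2
        rcases hk2 with rfl | rfl
        · exact haS hk1
        · exact hcS hk1
      · -- only c
        exfalso
        obtain ⟨k, hk1, hk2⟩ := hInt x hx hxB hxe f1 hf1E hf1B hf1e
        rw [hS1, Finset.mem_insert, Finset.mem_singleton] at hk2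
        rcases hk2 with rfl | rfl
        · exact haS hk1
        · exact hbS hk1
      · -- none
        exfalso
        obtain ⟨k, hk1, hk2⟩ := hInt x hx hxB hxe f1 hf1E hf1B hf1e
        rw [hS1, Finset.mem_insert, Finset.mem_singleton] at hk2
        rcases hk2 with rfl | rfl
        · exact haS hk1
        · exact hbS hk1
    -- r ≥ 3
    have hr3 : 3 ≤ r := by
      have hsub : ({a, b, c} : Finset (Fin r)) ⊆ Finset.univ := Finset.subset_univ _
      have hc3 : ({a, b, c} : Finset (Fin r)).card = 3 := by
        rw [Finset.card_insert_of_notMem (by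
          intro h
          rcases Finset.mem_insert.1 h with h' | h'
          · exact hab h'
          · exact hca (Finset.mem_singleton.1 h').symm), Finset.card_pair hcb.symm]
      have := Finset.card_le_card hsub
      rwa [Finset.card_univ, Fintype.card_fin, hc3] at this
    set i1 : Fin r := ⟨1, by omega⟩ with hi1_def
    set i2 : Fin r := ⟨2, by omega⟩ with hi2_def
    have h01 : i0 ≠ i1 := by intro h; have := congrArg Fin.val h; simp [hi0_def, hi1_def] at this
    have h02 : i0 ≠ i2 := by intro h; have := congrArg Fin.val h; simp [hi0_def, hi2_def] at this
    have h12 : i1 ≠ i2 := by intro h; have := congrArg Fin.val h; simp [hi1_def, hi2_def] at this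
    -- build the permutation
    set π1 : Equiv.Perm (Fin r) := Equiv.swap a i0 with hπ1_def
    set b' := π1 b with hb'_def
    set c' := π1 c with hc'_def
    have hπ1a : π1 a = i0 := Equiv.swap_apply_left a i0
    have hb'0 : b' ≠ i0 := by
      rw [hb'_def, ← hπ1a]
      exact fun h => hab (π1.injective h).symm
    have hc'0 : c' ≠ i0 := by
      rw [hc'_def, ← hπ1a]
      exact fun h => hca (π1.injective h)
    have hb'c' : b' ≠ c' := fun h => hcb (π1.injective h.symm)
    set π2 : Equiv.Perm (Fin r) := Equiv.swap b' i1 with hπ2_def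
    have hπ2b' : π2 b' = i1 := Equiv.swap_apply_left b' i1
    have hπ2i0 : π2 i0 = i0 :=
      Equiv.swap_apply_of_ne_of_ne (fun h => hb'0 h.symm) h01
    set c'' := π2 c' with hc''_def
    have hc''0 : c'' ≠ i0 := by
      rw [hc''_def, ← hπ2i0]
      exact fun h => hc'0 (π2.injective h)
    have hc''1 : c'' ≠ i1 := by
      rw [hc''_def, ← hπ2b']
      exact fun h => hb'c' (π2.injective h).symm
    set π3 : Equiv.Perm (Fin r) := Equiv.swap c'' i2 with hπ3_def
    set π : Equiv.Perm (Fin r) := (π1.trans π2).trans π3 with hπ_def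
    have hπa : π a = i0 := by
      show π3 (π2 (π1 a)) = i0
      rw [hπ1a, hπ2i0]
      exact Equiv.swap_apply_of_ne_of_ne (fun h => hc''0 h.symm) h02
    have hπb : π b = i1 := by
      show π3 (π2 (π1 b)) = i1
      rw [← hb'_def, hπ2b']
      exact Equiv.swap_apply_of_ne_of_ne (fun h => hc''1 h.symm) h12
    have hπc : π c = i2 := by
      show π3 (π2 (π1 c)) = i2
      rw [← hc'_def, ← hc''_def]
      exact Equiv.swap_apply_left c'' i2
    -- the map
    set φ : α → (Fin r ⊕ Fin 4) := fun x =>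
      if x = e then Sum.inr 0
      else if hx : x ∈ B then Sum.inl (π (gE ⟨x, hx⟩))
      else if SUPP x = {a, b} then Sum.inr 1
      else if SUPP x = {a, c} then Sum.inr 2
      else Sum.inr 3 with hφ_def
    have hφe : φ e = Sum.inr 0 := by rw [hφ_def]; simp
    have hφB : ∀ x, ∀ hx : x ∈ B, φ x = Sum.inl (π (gE ⟨x, hx⟩)) := by
      intro x hx
      have hxe : ¬ (x = e) := fun h => heB (h ▸ hx)
      rw [hφ_def]
      simp only [if_neg hxe]
      rw [dif_pos hx]
    have hpair1 : ({a, c} : Finset (Fin r)) ≠ {a, b} := by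
      intro h
      have : c ∈ ({a, b} : Finset (Fin r)) := by
        rw [← h]; exact Finset.mem_insert_of_mem (Finset.mem_singleton_self c)
      rcases Finset.mem_insert.1 this with h' | h'
      · exact hca h'
      · exact hcb (Finset.mem_singleton.1 h')
    have hpair2 : ({b, c} : Finset (Fin r)) ≠ {a, b} := by
      intro h
      have : a ∈ ({b, c} : Finset (Fin r)) := by
        rw [h]; exact Finset.mem_insert_self a _
      rcases Finset.mem_insert.1 this with h' | h'
      · exact hab h'
      · exact hca (Finset.mem_singleton.1 h').symm
    have hpair3 : ({b, c} : Finset (Fin r)) ≠ {a, c} := by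
      intro h
      have : b ∈ ({a, c} : Finset (Fin r)) := by
        rw [← h]; exact Finset.mem_insert_self b _
      rcases Finset.mem_insert.1 this with h' | h'
      · exact hab h'.symm
      · exact hcb.symm (Finset.mem_singleton.1 h')
    have hφ1 : ∀ x ∈ M.E, x ∉ B → x ≠ e → SUPP x = {a, b} → φ x = Sum.inr 1 := by
      intro x _ hxB hxe hS
      rw [hφ_def]
      simp only [if_neg hxe]
      rw [dif_neg hxB, if_pos hS]
    have hφ2 : ∀ x ∈ M.E, x ∉ B → x ≠ e → SUPP x = {a, c} → φ x = Sum.inr 2 := by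
      intro x _ hxB hxe hS
      rw [hφ_def]
      simp only [if_neg hxe]
      rw [dif_neg hxB, if_neg (by rw [hS]; exact hpair1), if_pos hS]
    have hφ3 : ∀ x ∈ M.E, x ∉ B → x ≠ e → SUPP x = {b, c} → φ x = Sum.inr 3 := by
      intro x _ hxB hxe hS
      rw [hφ_def]
      simp only [if_neg hxe]
      rw [dif_neg hxB, if_neg (by rw [hS]; exact hpair2), if_neg (by rw [hS]; exact hpair3)]
    -- column values of L_r
    have hL0 : ∀ k, LrMatrix r (Sum.inr 0) k = 1 := by
      intro k
      show (if (0 : Fin 4) = 0 then (1 : ZMod 2)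
        else if (0 : Fin 4) = 1 then (if k.val = 0 ∨ k.val = 1 then 1 else 0)
        else if (0 : Fin 4) = 2 then (if k.val = 0 ∨ k.val = 2 then 1 else 0)
        else (if k.val = 1 ∨ k.val = 2 then 1 else 0)) = _
      rw [if_pos rfl]
    have hL1 : ∀ k : Fin r, LrMatrix r (Sum.inr 1) k =
        if k.val = 0 ∨ k.val = 1 then 1 else 0 := by
      intro k
      show (if (1 : Fin 4) = 0 then (1 : ZMod 2)
        else if (1 : Fin 4) = 1 then (if k.val = 0 ∨ k.val = 1 then 1 else 0)
        else if (1 : Fin 4) = 2 then (if k.val = 0 ∨ k.val = 2 then 1 else 0)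
        else (if k.val = 1 ∨ k.val = 2 then 1 else 0)) = _
      rw [if_neg (by decide), if_pos rfl]
    have hL2 : ∀ k : Fin r, LrMatrix r (Sum.inr 2) k =
        if k.val = 0 ∨ k.val = 2 then 1 else 0 := by
      intro k
      show (if (2 : Fin 4) = 0 then (1 : ZMod 2)
        else if (2 : Fin 4) = 1 then (if k.val = 0 ∨ k.val = 1 then 1 else 0)
        else if (2 : Fin 4) = 2 then (if k.val = 0 ∨ k.val = 2 then 1 else 0)
        else (if k.val = 1 ∨ k.val = 2 then 1 else 0)) = _
      rw [if_neg (by decide), if_neg (by decide), if_pos rfl]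
    have hL3 : ∀ k : Fin r, LrMatrix r (Sum.inr 3) k =
        if k.val = 1 ∨ k.val = 2 then 1 else 0 := by
      intro k
      show (if (3 : Fin 4) = 0 then (1 : ZMod 2)
        else if (3 : Fin 4) = 1 then (if k.val = 0 ∨ k.val = 1 then 1 else 0)
        else if (3 : Fin 4) = 2 then (if k.val = 0 ∨ k.val = 2 then 1 else 0)
        else (if k.val = 1 ∨ k.val = 2 then 1 else 0)) = _
      rw [if_neg (by decide), if_neg (by decide), if_neg (by decide)]
    -- membership translations
    have hmema : ∀ k : Fin r, π.symm k = a ↔ k.val = 0 := by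
      intro k
      rw [Equiv.symm_apply_eq, hπa, hi0_def]
      exact ⟨fun h => congrArg Fin.val h, fun h => Fin.ext h⟩
    have hmemb : ∀ k : Fin r, π.symm k = b ↔ k.val = 1 := by
      intro k
      rw [Equiv.symm_apply_eq, hπb, hi1_def]
      exact ⟨fun h => congrArg Fin.val h, fun h => Fin.ext h⟩
    have hmemc : ∀ k : Fin r, π.symm k = c ↔ k.val = 2 := by
      intro k
      rw [Equiv.symm_apply_eq, hπc, hi2_def]
      exact ⟨fun h => congrArg Fin.val h, fun h => Fin.ext h⟩
    -- column identity
    have hcol : ∀ x ∈ M.E, ∀ k, LrMatrix r (φ x) k = u x (π.symm k) := by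
      intro x hx k
      by_cases hxe : x = e
      · subst hxe
        rw [hφe, hue, hL0]
      by_cases hxB : x ∈ B
      · rw [hφB x hxB]
        have hxg : x = g (gE ⟨x, hxB⟩) := (hgval x hxB).symm
        conv_rhs => rw [hxg]
        rw [hug, Pi.single_apply]
        show (if k = π (gE ⟨x, hxB⟩) then (1 : ZMod 2) else 0) = _
        exact if_congr (Equiv.symm_apply_eq π).symm rfl rfl
      rcases hcl3 x hx hxB hxe with hS | hS | hS
      · rw [hφ1 x hx hxB hxe hS, hL1, huval, hS]
        refine (if_congr ?_ rfl rfl).symm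
        rw [Finset.mem_insert, Finset.mem_singleton, hmema, hmemb]
      · rw [hφ2 x hx hxB hxe hS, hL2, huval, hS]
        refine (if_congr ?_ rfl rfl).symm
        rw [Finset.mem_insert, Finset.mem_singleton, hmema, hmemc]
      · rw [hφ3 x hx hxB hxe hS, hL3, huval, hS]
        refine (if_congr ?_ rfl rfl).symm
        rw [Finset.mem_insert, Finset.mem_singleton, hmemb, hmemc]
    -- sum transfer
    have hcomm : ∀ s : Finset α, ↑s ⊆ M.E →
        ((∑ i ∈ s, u i = 0) ↔ (∑ i ∈ s, LrMatrix r (φ i) = 0)) := by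
      intro s hs
      have h1 : ∀ k, ∑ i ∈ s, LrMatrix r (φ i) k = ∑ i ∈ s, u i (π.symm k) :=
        fun k => Finset.sum_congr rfl (fun x hx => hcol x (hs hx) k)
      constructor
      · intro h
        funext k
        rw [Finset.sum_apply, h1 k, ← Finset.sum_apply, h]
        rfl
      · intro h
        funext j
        have h2 := congrFun h (π j)
        rw [Finset.sum_apply, h1 (π j)] at h2
        rw [Finset.sum_apply]
        simp only [Equiv.symm_apply_apply] at h2
        exact h2
    -- tags determine supports
    have hφtag : ∀ x ∈ M.E, x ∉ B → x ≠ e →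
        (φ x = Sum.inr 1 ∧ SUPP x = {a, b}) ∨ (φ x = Sum.inr 2 ∧ SUPP x = {a, c}) ∨
          (φ x = Sum.inr 3 ∧ SUPP x = {b, c}) := by
      intro x hx hxB hxe
      rcases hcl3 x hx hxB hxe with hS | hS | hS
      · exact Or.inl ⟨hφ1 x hx hxB hxe hS, hS⟩
      · exact Or.inr (Or.inl ⟨hφ2 x hx hxB hxe hS, hS⟩)
      · exact Or.inr (Or.inr ⟨hφ3 x hx hxB hxe hS, hS⟩)
    have hφnotinr : ∀ x ∈ M.E, x ∉ B → x ≠ e → φ x ≠ Sum.inr 0 := by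
      intro x hx hxB hxe h
      rcases hφtag x hx hxB hxe with ⟨h', _⟩ | ⟨h', _⟩ | ⟨h', _⟩ <;>
        rw [h'] at h <;> exact absurd (Sum.inr_injective h) (by decide)
    -- injectivity
    have hinjφ : Set.InjOn φ M.E := by
      intro x hx y hy hxy
      by_cases hxe : x = e <;> by_cases hye : y = e
      · rw [hxe, hye]
      · exfalso
        subst hxe
        rw [hφe] at hxy
        by_cases hyB : y ∈ B
        · rw [hφB y hyB] at hxy; cases hxy
        · exact hφnotinr y hy hyB hye hxy.symm
      · exfalso
        subst hye
        rw [hφe] at hxy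
        by_cases hxB : x ∈ B
        · rw [hφB x hxB] at hxy; cases hxy
        · exact hφnotinr x hx hxB hxe hxy
      · by_cases hxB : x ∈ B <;> by_cases hyB : y ∈ B
        · rw [hφB x hxB, hφB y hyB] at hxy
          have h2 := gE.injective (π.injective (Sum.inl_injective hxy))
          exact congrArg Subtype.val h2
        · exfalso
          rcases hφtag y hy hyB hye with ⟨h', _⟩ | ⟨h', _⟩ | ⟨h', _⟩ <;>
            rw [hφB x hxB, h'] at hxy <;> cases hxy
        · exfalso
          rcases hφtag x hx hxB hxe with ⟨h', _⟩ | ⟨h', _⟩ | ⟨h', _⟩ <;>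
            rw [hφB y hyB, h'] at hxy <;> cases hxy
        · refine hsupp_inj x hx y hy ?_
          rcases hφtag x hx hxB hxe with ⟨h1', hS1'⟩ | ⟨h1', hS1'⟩ | ⟨h1', hS1'⟩ <;>
            rcases hφtag y hy hyB hye with ⟨h2', hS2'⟩ | ⟨h2', hS2'⟩ | ⟨h2', hS2'⟩ <;>
            rw [h1', h2'] at hxy <;>
            first
              | (exact absurd (Sum.inr_injective hxy) (by decide))
              | (rw [hS1', hS2'])
    -- surjectivity
    have hsurj : φ '' M.E = Set.univ := by
      refine Set.eq_univ_of_forall ?_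
      rintro (j | j)
      · refine ⟨g (π.symm j), hBE (hgB _), ?_⟩
        rw [hφB (g (π.symm j)) (hgB _)]
        congr 1
        have : (⟨g (π.symm j), hgB _⟩ : B) = gE.symm (π.symm j) := rfl
        rw [this, hgE, Equiv.apply_symm_apply]
      · fin_cases j
        · exact ⟨e, hEe, hφe⟩
        · exact ⟨f1, hf1E, hφ1 f1 hf1E hf1B hf1e hS1⟩
        · exact ⟨f3, hf3E, hφ2 f3 hf3E hf3B hf3e hS3⟩
        · exact ⟨f2, hf2E, hφ3 f2 hf2E hf2B hf2e hS2⟩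
    have hcritN : ∀ J : Set (Fin r ⊕ Fin 4), ((vmatroid (LrMatrix r)).Indep J ↔
        ∀ t : Finset (Fin r ⊕ Fin 4), ↑t ⊆ J → t.Nonempty → ∑ i ∈ t, LrMatrix r i ≠ 0) := by
      intro J
      rw [vmatroid_indep, z2_li_set_iff (LrMatrix r) (Set.toFinite J)]
    have hiso := iso_of_crit_full rfl u (LrMatrix r) hEfin hcritM hcritN φ hinjφ hcomm hsurj
    exact ⟨vmatroid (LrMatrix r), ⟨rfl, fun I => vmatroid_indep _ I⟩, φ, hiso, hφe⟩

end LoosePaper
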